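/- arXiv:2105.04699 — 2 statements merged into one kernel-verified Lean document; each statement's English description precedes it below -/
import Mathlib

section
/- (Simulation lemma, ∞-norm version.) Let M* and M̂ be two MDPs over a finite state space S and action space A that share the same reward function r : S×A → [0,1] and discount factor γ ∈ (0,1), but have transition kernels p* and p̂ satisfying max_{s,a} ‖p̂(·|s,a) - p*(·|s,a)‖₁ ≤ ε. Then for any fixed policy π, the value functions satisfy ‖V^π_{M*} - V^π_{M̂}‖_∞ ≤ γε/(1-γ)². -/
/-- Simulation lemma, ∞-norm version: two MDPs sharing rewards in
[0,1] whose transition kernels are ε-close in L¹ have value functions (for any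
fixed policy) that are γε/(1-γ)²-close in the sup norm. -/
theorem stmt_3 {S A : Type*} [Fintype S] [Nonempty S] [Fintype A]
    (γ ε : ℝ) (hγ0 : 0 < γ) (hγ1 : γ < 1) (hε : 0 ≤ ε)
    (r : S → A → ℝ) (hr : ∀ s a, r s a ∈ Set.Icc (0 : ℝ) 1)
    (pstar phat : S → A → S → ℝ)
    (hpstar_nonneg : ∀ s a s', 0 ≤ pstar s a s')
    (hpstar_sum : ∀ s a, ∑ s', pstar s a s' = 1)
    (hphat_nonneg : ∀ s a s', 0 ≤ phat s a s')
    (hphat_sum : ∀ s a, ∑ s', phat s a s' = 1)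
    (hclose : ∀ s a, ∑ s', |phat s a s' - pstar s a s'| ≤ ε)
    (π : S → A) (Vstar Vhat : S → ℝ)
    (hVstar : ∀ s, Vstar s = r s (π s) + γ * ∑ s', pstar s (π s) s' * Vstar s')
    (hVhat : ∀ s, Vhat s = r s (π s) + γ * ∑ s', phat s (π s) s' * Vhat s') :
    ‖Vstar - Vhat‖ ≤ γ * ε / (1 - γ) ^ 2 := by
  have h1γ : 0 < 1 - γ := by linarith
  have hnV : (0:ℝ) ≤ ‖Vhat‖ := norm_nonneg _
  -- bound on ‖Vhat‖
  have hVb : ‖Vhat‖ ≤ 1 / (1 - γ) := by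
    have key : ‖Vhat‖ ≤ 1 + γ * ‖Vhat‖ := by
      rw [pi_norm_le_iff_of_nonneg (by positivity)]
      intro s
      rw [Real.norm_eq_abs, hVhat s]
      have h1 : |∑ s', phat s (π s) s' * Vhat s'| ≤ ‖Vhat‖ := by
        calc |∑ s', phat s (π s) s' * Vhat s'|
            ≤ ∑ s', |phat s (π s) s' * Vhat s'| := Finset.abs_sum_le_sum_abs _ _
          _ ≤ ∑ s', phat s (π s) s' * ‖Vhat‖ := by
              apply Finset.sum_le_sum
              intro i _
              rw [abs_mul, abs_of_nonneg (hphat_nonneg _ _ _)]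
              exact mul_le_mul_of_nonneg_left (norm_le_pi_norm Vhat i) (hphat_nonneg _ _ _)
          _ = ‖Vhat‖ := by rw [← Finset.sum_mul, hphat_sum, one_mul]
      have hr1 := (hr s (π s)).1
      have hr2 := (hr s (π s)).2
      calc |r s (π s) + γ * ∑ s', phat s (π s) s' * Vhat s'|
          ≤ |r s (π s)| + |γ * ∑ s', phat s (π s) s' * Vhat s'| := abs_add_le _ _
        _ ≤ 1 + γ * ‖Vhat‖ := by
            rw [abs_mul, abs_of_pos hγ0, abs_of_nonneg hr1]
            have := mul_le_mul_of_nonneg_left h1 hγ0.le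
            linarith
    rw [le_div_iff₀ h1γ]
    nlinarith
  set D := ‖Vstar - Vhat‖ with hD
  have hDn : (0:ℝ) ≤ D := norm_nonneg _
  have key : D ≤ γ * (ε * ‖Vhat‖ + D) := by
    rw [hD, pi_norm_le_iff_of_nonneg (by positivity)]
    intro s
    rw [Pi.sub_apply, Real.norm_eq_abs, hVstar s, hVhat s]
    have hrw : r s (π s) + γ * ∑ s', pstar s (π s) s' * Vstar s'
        - (r s (π s) + γ * ∑ s', phat s (π s) s' * Vhat s')
        = γ * ((∑ s', pstar s (π s) s' * (Vstar s' - Vhat s'))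
            + ∑ s', (pstar s (π s) s' - phat s (π s) s') * Vhat s') := by
      have hs : (∑ s', pstar s (π s) s' * Vstar s') - ∑ s', phat s (π s) s' * Vhat s'
          = (∑ s', pstar s (π s) s' * (Vstar s' - Vhat s'))
            + ∑ s', (pstar s (π s) s' - phat s (π s) s') * Vhat s' := by
        rw [← Finset.sum_add_distrib, ← Finset.sum_sub_distrib]
        exact Finset.sum_congr rfl fun i _ => by ring
      calc r s (π s) + γ * ∑ s', pstar s (π s) s' * Vstar s'
          - (r s (π s) + γ * ∑ s', phat s (π s) s' * Vhat s')
          = γ * ((∑ s', pstar s (π s) s' * Vstar s')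
              - ∑ s', phat s (π s) s' * Vhat s') := by ring
        _ = _ := by rw [hs]
    rw [hrw, abs_mul, abs_of_pos hγ0]
    have h1 : |∑ s', pstar s (π s) s' * (Vstar s' - Vhat s')| ≤ D := by
      calc |∑ s', pstar s (π s) s' * (Vstar s' - Vhat s')|
          ≤ ∑ s', |pstar s (π s) s' * (Vstar s' - Vhat s')| := Finset.abs_sum_le_sum_abs _ _
        _ ≤ ∑ s', pstar s (π s) s' * D := by
            apply Finset.sum_le_sum
            intro i _
            rw [abs_mul, abs_of_nonneg (hpstar_nonneg _ _ _)]
            exact mul_le_mul_of_nonneg_left (norm_le_pi_norm (Vstar - Vhat) i)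
              (hpstar_nonneg _ _ _)
        _ = D := by rw [← Finset.sum_mul, hpstar_sum, one_mul]
    have h2 : |∑ s', (pstar s (π s) s' - phat s (π s) s') * Vhat s'| ≤ ε * ‖Vhat‖ := by
      calc |∑ s', (pstar s (π s) s' - phat s (π s) s') * Vhat s'|
          ≤ ∑ s', |(pstar s (π s) s' - phat s (π s) s') * Vhat s'| :=
            Finset.abs_sum_le_sum_abs _ _
        _ ≤ ∑ s', |pstar s (π s) s' - phat s (π s) s'| * ‖Vhat‖ := by
            apply Finset.sum_le_sum
            intro i _
            rw [abs_mul]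
            exact mul_le_mul_of_nonneg_left (norm_le_pi_norm Vhat i) (abs_nonneg _)
        _ = (∑ s', |phat s (π s) s' - pstar s (π s) s'|) * ‖Vhat‖ := by
            rw [Finset.sum_mul]
            apply Finset.sum_congr rfl
            intro i _
            rw [abs_sub_comm]
        _ ≤ ε * ‖Vhat‖ := mul_le_mul_of_nonneg_right (hclose s (π s)) hnV
    have h3 : |(∑ s', pstar s (π s) s' * (Vstar s' - Vhat s'))
        + ∑ s', (pstar s (π s) s' - phat s (π s) s') * Vhat s'| ≤ D + ε * ‖Vhat‖ := by
      calc _ ≤ _ := abs_add_le _ _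
        _ ≤ D + ε * ‖Vhat‖ := add_le_add h1 h2
    have := mul_le_mul_of_nonneg_left h3 hγ0.le
    linarith
  have hεV : ε * ‖Vhat‖ ≤ ε / (1 - γ) := by
    rw [div_eq_mul_inv]
    calc ε * ‖Vhat‖ ≤ ε * (1 / (1 - γ)) := mul_le_mul_of_nonneg_left hVb hε
      _ = ε * (1 - γ)⁻¹ := by rw [one_div]
  have : D * (1 - γ) ≤ γ * (ε / (1 - γ)) := by nlinarith
  rw [le_div_iff₀ (by positivity : (0:ℝ) < (1 - γ)^2)]
  have h2 : γ * (ε / (1 - γ)) * (1 - γ) = γ * ε := by field_simp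
  nlinarith [mul_le_mul_of_nonneg_right this h1γ.le]
end

section
/- (Policy gradient theorem, finite case.) For a finite MDP with discount γ ∈ (0,1) and differentiable positive policy π_θ, the gradient of the expected return η(θ) = E[∑_t γ^t r(s_t,a_t)] satisfies ∇_θ η(θ) = ∑_s d^{π_θ}(s) ∑_a Q^{π_θ}(s,a) ∇_θ π_θ(a|s), where d^{π_θ} is the discounted visitation measure and Q^{π_θ} the action-value function. -/
open Finset Matrix

private lemma det_diff {n : Type*} [Fintype n] [DecidableEq n]
    (B : ℝ → Matrix n n ℝ) (h : ∀ i j, Differentiable ℝ (fun θ => B θ i j)) :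
    Differentiable ℝ (fun θ => (B θ).det) := by
  simp only [Matrix.det_apply, Units.smul_def, zsmul_eq_mul]
  apply Differentiable.fun_sum
  intro σ _
  exact (Differentiable.fun_finsetProd (fun i _ => h (σ i) i)).const_mul _

/-- Policy gradient theorem, finite case: for a finite discounted
MDP with differentiable positive policy π_θ, the gradient of the expected return
η(θ) is ∑_s d^{π_θ}(s) ∑_a Q^{π_θ}(s,a) ∇_θ π_θ(a|s). -/
theorem stmt_18 {S A : Type*} [Fintype S] [Fintype A]
    (γ : ℝ) (hγ0 : 0 < γ) (hγ1 : γ < 1)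
    (r : S → A → ℝ)
    (p : S → A → S → ℝ) (hp_nonneg : ∀ s a s', 0 ≤ p s a s')
    (hp_sum : ∀ s a, ∑ s', p s a s' = 1)
    (ρ : S → ℝ) (hρ_nonneg : ∀ s, 0 ≤ ρ s) (hρ_sum : ∑ s, ρ s = 1)
    (π : ℝ → S → A → ℝ)
    (hπ_pos : ∀ θ s a, 0 < π θ s a) (hπ_sum : ∀ θ s, ∑ a, π θ s a = 1)
    (hπ_diff : ∀ s a, Differentiable ℝ (fun θ => π θ s a))
    (V : ℝ → S → ℝ) (Q : ℝ → S → A → ℝ)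
    (hQ : ∀ θ s a, Q θ s a = r s a + γ * ∑ s', p s a s' * V θ s')
    (hV : ∀ θ s, V θ s = ∑ a, π θ s a * Q θ s a)
    (η : ℝ → ℝ) (hη : ∀ θ, η θ = ∑ s, ρ s * V θ s)
    (θ₀ : ℝ)
    (ν : ℕ → S → ℝ)                       -- ν t s = P(s_t = s) under π_{θ₀}
    (hν0 : ∀ s, ν 0 s = ρ s)
    (hν : ∀ t s', ν (t + 1) s' = ∑ s, ∑ a, ν t s * π θ₀ s a * p s a s')
    (d : S → ℝ) (hd : ∀ s, d s = ∑' t : ℕ, γ ^ t * ν t s) :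
    HasDerivAt η
      (∑ s, d s * ∑ a, Q θ₀ s a * deriv (fun θ => π θ s a) θ₀) θ₀ := by
  classical
  set π' : S → A → ℝ := fun s a => deriv (fun θ => π θ s a) θ₀ with hπ'def
  -- the matrix family
  set M : ℝ → Matrix S S ℝ := fun θ => Matrix.of fun s s' => γ * ∑ a, π θ s a * p s a s'
    with hMdef
  have hMapp : ∀ θ s s', M θ s s' = γ * ∑ a, π θ s a * p s a s' := fun θ s s' => rfl
  have hMnn : ∀ θ s s', 0 ≤ M θ s s' := by
    intro θ s s'
    exact mul_nonneg hγ0.le (Finset.sum_nonneg fun a _ =>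
      mul_nonneg (hπ_pos θ s a).le (hp_nonneg s a s'))
  have hMrow : ∀ θ s, ∑ s', M θ s s' = γ := by
    intro θ s
    simp only [hMapp, ← Finset.mul_sum]
    rw [Finset.sum_comm]
    simp only [← Finset.mul_sum]
    simp [hp_sum, hπ_sum θ s]
  have hMle : ∀ θ s s', M θ s s' ≤ γ := by
    intro θ s s'
    calc M θ s s' ≤ ∑ s'', M θ s s'' :=
          Finset.single_le_sum (fun i _ => hMnn θ s i) (Finset.mem_univ s')
      _ = γ := hMrow θ s
  set N : ℝ → Matrix S S ℝ := fun θ => 1 - M θ with hNdef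
  have hNapp : ∀ θ s s', N θ s s' = (if s = s' then 1 else 0) - M θ s s' := by
    intro θ s s'
    simp [hNdef, Matrix.one_apply]
  have hdet : ∀ θ, (N θ).det ≠ 0 := by
    intro θ
    apply det_ne_zero_of_sum_row_lt_diag
    intro k
    have h1 : ∀ j ∈ Finset.univ.erase k, ‖N θ k j‖ = M θ k j := by
      intro j hj
      rw [hNapp]
      rw [Finset.mem_erase] at hj
      rw [if_neg (Ne.symm hj.1)]
      simp [abs_of_nonneg (hMnn θ k j)]
    rw [Finset.sum_congr rfl h1]
    have h2 : ∑ j ∈ Finset.univ.erase k, M θ k j = γ - M θ k k := by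
      rw [Finset.sum_erase_eq_sub (Finset.mem_univ k), hMrow]
    rw [h2, hNapp, if_pos rfl]
    have h3 : 0 < 1 - M θ k k := by linarith [hMle θ k k]
    rw [Real.norm_eq_abs, abs_of_pos h3]
    linarith

  set rπ : ℝ → S → ℝ := fun θ s => ∑ a, π θ s a * r s a with hrπdef
  -- Bellman in matrix form
  have hBell : ∀ θ, N θ *ᵥ V θ = rπ θ := by
    intro θ
    funext s
    have h1 : (N θ *ᵥ V θ) s = V θ s - ∑ s', M θ s s' * V θ s' := by
      simp only [Matrix.mulVec, dotProduct, hNapp, sub_mul, Finset.sum_sub_distrib,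
        ite_mul, one_mul, zero_mul, Finset.sum_ite_eq, Finset.mem_univ, if_pos]
    rw [h1]
    have h2 : V θ s = rπ θ s + ∑ s', M θ s s' * V θ s' := by
      rw [hV θ s]
      simp only [hQ θ s, mul_add, Finset.sum_add_distrib, hrπdef, hMapp]
      congr 1
      simp only [Finset.mul_sum, Finset.sum_mul]
      rw [Finset.sum_comm]
      apply Finset.sum_congr rfl
      intro s' _
      apply Finset.sum_congr rfl
      intro a _
      ring
    rw [h2]; ring
  have hVform : ∀ θ s, V θ s = ∑ s', ((N θ).det)⁻¹ * (N θ).adjugate s s' * rπ θ s' := by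
    intro θ s
    have h1 : (N θ)⁻¹ *ᵥ rπ θ = V θ := by
      rw [← hBell θ, Matrix.mulVec_mulVec,
        Matrix.nonsing_inv_mul _ (isUnit_iff_ne_zero.2 (hdet θ)), Matrix.one_mulVec]
    rw [← h1]
    simp only [Matrix.mulVec, dotProduct, Matrix.inv_def, Matrix.smul_apply,
      Ring.inverse_eq_inv', smul_eq_mul]
  -- entries of N are differentiable in θ
  have hNdiff : ∀ s s', Differentiable ℝ (fun θ => N θ s s') := by
    intro s s'
    simp only [hNapp]
    exact (differentiable_const _).sub
      ((Differentiable.fun_sum fun a _ => (hπ_diff s a).mul (differentiable_const _)).const_mul γ)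
  have hVdiff : ∀ s, Differentiable ℝ (fun θ => V θ s) := by
    intro s
    have : (fun θ => V θ s) = fun θ => ∑ s', ((N θ).det)⁻¹ * (N θ).adjugate s s' * rπ θ s' := by
      funext θ; exact hVform θ s
    rw [this]
    apply Differentiable.fun_sum
    intro s' _
    apply Differentiable.mul
    · apply Differentiable.mul
      · exact (det_diff N hNdiff).inv hdet
      · have : (fun θ => (N θ).adjugate s s') =
            fun θ => ((N θ).updateRow s' (Pi.single s 1)).det := by
          funext θ; rw [Matrix.adjugate_apply]
        rw [this]
        apply det_diff
        intro i j
        simp only [Matrix.updateRow_apply]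
        by_cases h : i = s'
        · simp [h]
        · simp only [if_neg h]
          exact hNdiff i j
    · exact Differentiable.fun_sum fun a _ => (hπ_diff _ a).mul (differentiable_const _)

  set Vd : S → ℝ := fun s => deriv (fun θ => V θ s) θ₀ with hVddef
  have hVdD : ∀ s, HasDerivAt (fun θ => V θ s) (Vd s) θ₀ :=
    fun s => ((hVdiff s) θ₀).hasDerivAt
  have hBellD : ∀ s, Vd s = (∑ a, Q θ₀ s a * π' s a) + ∑ s', M θ₀ s s' * Vd s' := by
    intro s
    have hfun : (fun θ => V θ s) =
        fun θ => ∑ a, π θ s a * (r s a + γ * ∑ s', p s a s' * V θ s') := by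
      funext θ
      rw [hV θ s]
      exact Finset.sum_congr rfl fun a _ => by rw [hQ θ s a]
    have hder : HasDerivAt (fun θ => V θ s)
        (∑ a, (π' s a * (r s a + γ * ∑ s', p s a s' * V θ₀ s') +
          π θ₀ s a * (γ * ∑ s', p s a s' * Vd s'))) θ₀ := by
      rw [hfun]
      apply HasDerivAt.fun_sum
      intro a _
      have h1 : HasDerivAt (fun θ => π θ s a) (π' s a) θ₀ := ((hπ_diff s a) θ₀).hasDerivAt
      have h2 : HasDerivAt (fun θ => r s a + γ * ∑ s', p s a s' * V θ s')
          (γ * ∑ s', p s a s' * Vd s') θ₀ := by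
        apply HasDerivAt.const_add
        apply HasDerivAt.const_mul
        apply HasDerivAt.fun_sum
        intro s' _
        exact (hVdD s').const_mul _
      exact h1.mul h2
    rw [(hVdD s).unique hder, Finset.sum_add_distrib]
    congr 1
    · refine Finset.sum_congr rfl fun a _ => ?_
      rw [← hQ θ₀ s a]; ring
    · simp only [hMapp, Finset.mul_sum, Finset.sum_mul]
      rw [Finset.sum_comm]
      exact Finset.sum_congr rfl fun a _ => Finset.sum_congr rfl fun s' _ => by ring
  have hηD : HasDerivAt η (∑ s, ρ s * Vd s) θ₀ := by
    have hfun : η = fun θ => ∑ s, ρ s * V θ s := funext hη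
    rw [hfun]
    exact HasDerivAt.fun_sum fun s _ => (hVdD s).const_mul _
  have hνfacts : ∀ t, (∀ s, 0 ≤ ν t s) ∧ (∑ s, ν t s = 1) := by
    intro t
    induction t with
    | zero => exact ⟨fun s => by rw [hν0]; exact hρ_nonneg s, by simp [hν0, hρ_sum]⟩
    | succ t ih =>
      constructor
      · intro s'
        rw [hν]
        refine Finset.sum_nonneg fun s _ => Finset.sum_nonneg fun a _ => ?_
        exact mul_nonneg (mul_nonneg (ih.1 s) (hπ_pos θ₀ s a).le) (hp_nonneg s a s')
      · simp only [hν]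
        rw [Finset.sum_comm]
        have h3 : ∀ s, ∑ s', ∑ a, ν t s * π θ₀ s a * p s a s' = ν t s := by
          intro s
          rw [Finset.sum_comm]
          have h4 : ∀ a, ∑ s', ν t s * π θ₀ s a * p s a s' = ν t s * π θ₀ s a := by
            intro a; rw [← Finset.mul_sum, hp_sum, mul_one]
          rw [Finset.sum_congr rfl fun a _ => h4 a, ← Finset.mul_sum, hπ_sum, mul_one]
        rw [Finset.sum_congr rfl fun s _ => h3 s, ih.2]
  have hνle : ∀ t s, ν t s ≤ 1 := by
    intro t s
    calc ν t s ≤ ∑ s', ν t s' :=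
          Finset.single_le_sum (fun i _ => (hνfacts t).1 i) (Finset.mem_univ s)
      _ = 1 := (hνfacts t).2
  have hsumm : ∀ s, Summable (fun t : ℕ => γ ^ t * ν t s) := by
    intro s
    refine Summable.of_nonneg_of_le
      (fun t => mul_nonneg (pow_nonneg hγ0.le t) ((hνfacts t).1 s))
      (fun t => ?_) (summable_geometric_of_lt_one hγ0.le hγ1)
    calc γ ^ t * ν t s ≤ γ ^ t * 1 :=
          mul_le_mul_of_nonneg_left (hνle t s) (pow_nonneg hγ0.le t)
      _ = γ ^ t := mul_one _
  have hkey : ∀ s', d s' = ρ s' + ∑ s, d s * M θ₀ s s' := by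
    intro s'
    rw [hd s', Summable.tsum_eq_zero_add (hsumm s')]
    congr 1
    · simp [hν0]
    · have h1 : ∀ t : ℕ, γ ^ (t + 1) * ν (t + 1) s' = ∑ s, (γ ^ t * ν t s) * M θ₀ s s' := by
        intro t
        rw [hν t s', Finset.mul_sum]
        refine Finset.sum_congr rfl fun s _ => ?_
        rw [hMapp]
        simp only [Finset.mul_sum]
        refine Finset.sum_congr rfl fun a _ => ?_
        ring
      calc ∑' t : ℕ, γ ^ (t + 1) * ν (t + 1) s'
          = ∑' t : ℕ, ∑ s, (γ ^ t * ν t s) * M θ₀ s s' := tsum_congr h1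
        _ = ∑ s, ∑' t : ℕ, (γ ^ t * ν t s) * M θ₀ s s' :=
            Summable.tsum_finsetSum (fun s _ => (hsumm s).mul_right _)
        _ = ∑ s, d s * M θ₀ s s' := by
            refine Finset.sum_congr rfl fun s _ => ?_
            rw [tsum_mul_right, hd]
  have hfinal : ∑ s, d s * ∑ a, Q θ₀ s a * π' s a = ∑ s, ρ s * Vd s := by
    have hA : ∀ s, ∑ a, Q θ₀ s a * π' s a = Vd s - ∑ s', M θ₀ s s' * Vd s' := by
      intro s; rw [hBellD s]; ring
    calc ∑ s, d s * ∑ a, Q θ₀ s a * π' s a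
        = ∑ s, d s * Vd s - ∑ s, ∑ s', d s * (M θ₀ s s' * Vd s') := by
          simp only [hA, mul_sub, Finset.mul_sum, Finset.sum_sub_distrib]
      _ = ∑ s, ρ s * Vd s := ?_
    rw [Finset.sum_comm]
    have h5 : ∀ s', ∑ s, d s * (M θ₀ s s' * Vd s') = (∑ s, d s * M θ₀ s s') * Vd s' := by
      intro s'; rw [Finset.sum_mul]; exact Finset.sum_congr rfl fun s _ => by ring
    rw [Finset.sum_congr rfl fun s' _ => h5 s', ← Finset.sum_sub_distrib]
    refine Finset.sum_congr rfl fun s _ => ?_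
    rw [hkey s]; ring
  exact hfinal ▸ hηD
end
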